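/- Every compact uniquely remotal subset of a normed linear space is a singleton. -/

import Mathlib

/-- Farthest distance from `x` to a set `M`. -/
noncomputable def fdist {X : Type*} [NormedAddCommGroup X] (x : X) (M : Set X) : ℝ :=
  sSup ((fun m => ‖x - m‖) '' M)

theorem compact_uniquely_remotal_singleton
    {X : Type*} [NormedAddCommGroup X] [NormedSpace ℝ X]
    (M : Set X) (hM : M.Nonempty) (hcomp : IsCompact M)
    (hur : ∀ x : X, ∃ m, {p ∈ M | ‖x - p‖ = fdist x M} = {m}) :
    ∃ m : X, M = {m} := by
  classical
  obtain ⟨a, haM⟩ := hM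
  set r : X → ℝ := fun x => fdist x M with hrdef
  -- basic facts about r
  have hbdd : ∀ x : X, BddAbove ((fun m => ‖x - m‖) '' M) := by
    intro x
    exact (hcomp.image (by fun_prop)).bddAbove
  have hne : ∀ x : X, ((fun m => ‖x - m‖) '' M).Nonempty := fun x => ⟨_, a, haM, rfl⟩
  have hle : ∀ x : X, ∀ p ∈ M, ‖x - p‖ ≤ r x := by
    intro x p hp
    exact le_csSup (hbdd x) ⟨p, hp, rfl⟩
  -- the farthest point map
  choose F hFa using hur
  have hFmem : ∀ x : X, F x ∈ M ∧ ‖x - F x‖ = r x := by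
    intro x
    have : F x ∈ {p ∈ M | ‖x - p‖ = fdist x M} := by
      rw [hFa x]; rfl
    exact this
  have hFuniq : ∀ x : X, ∀ p ∈ M, ‖x - p‖ = r x → p = F x := by
    intro x p hp he
    have : p ∈ ({F x} : Set X) := by
      rw [← hFa x]; exact ⟨hp, he⟩
    exact this
  have hrnonneg : ∀ x : X, 0 ≤ r x := fun x => le_trans (norm_nonneg _) (hle x a haM)
  set D := Metric.diam M with hDdef
  have hbound : Bornology.IsBounded M := hcomp.isBounded
  have hdistD : ∀ p ∈ M, ∀ q ∈ M, dist p q ≤ D := fun p hp q hq =>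
    Metric.dist_le_diam_of_mem hbound hp hq
  by_cases hD : D ≤ 0
  · -- M is a subsingleton
    refine ⟨a, Set.eq_singleton_iff_unique_mem.2 ⟨haM, fun p hp => ?_⟩⟩
    have h1 : dist p a ≤ 0 := le_trans (hdistD p hp a haM) hD
    have := dist_nonneg (x := p) (y := a)
    have : dist p a = 0 := le_antisymm h1 this
    exact dist_eq_zero.1 this
  push_neg at hD
  exfalso
  -- r x ≥ D/2
  have hghalf : ∀ x : X, D ≤ 2 * r x := by
    intro x
    refine Metric.diam_le_of_forall_dist_le (by linarith [hrnonneg x]) ?_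
    intro p hp q hq
    calc dist p q ≤ dist p x + dist x q := dist_triangle _ _ _
      _ ≤ r x + r x := by
          have h1 : dist p x = ‖x - p‖ := by rw [dist_comm, dist_eq_norm]
          have h2 : dist x q = ‖x - q‖ := by rw [dist_eq_norm]
          rw [h1, h2]
          exact add_le_add (hle x p hp) (hle x q hq)
      _ = 2 * r x := by ring
  -- r is 1-Lipschitz, hence continuous
  have hlip : ∀ x y : X, r x ≤ r y + dist x y := by
    intro x y
    refine csSup_le (hne x) ?_
    rintro b ⟨p, hp, rfl⟩
    calc ‖x - p‖ ≤ ‖x - y‖ + ‖y - p‖ := by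
          have : x - p = (x - y) + (y - p) := by abel
          rw [this]; exact norm_add_le _ _
      _ ≤ dist x y + r y := by
          rw [← dist_eq_norm]
          exact add_le_add le_rfl (hle y p hp)
      _ = r y + dist x y := by ring
  have hrcont : Continuous r := by
    refine LipschitzWith.continuous (K := 1) (LipschitzWith.of_dist_le_mul ?_)
    intro x y
    rw [NNReal.coe_one, one_mul, Real.dist_eq, abs_sub_le_iff]
    have h1 := hlip x y
    have h2 := hlip y x
    have h3 : dist y x = dist x y := dist_comm y x
    constructor <;> linarith
  -- minimizers over convex hulls of finite sets
  have hmin : ∀ s : Set X, s.Finite → s.Nonempty →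
      ∃ c ∈ convexHull ℝ s, ∀ y ∈ convexHull ℝ s, r c ≤ r y := by
    intro s hfin hnes
    have hcpt : IsCompact (convexHull ℝ s) := hfin.isCompact_convexHull (𝕜 := ℝ)
    have hne' : (convexHull ℝ s).Nonempty := hnes.mono (subset_convexHull ℝ s)
    obtain ⟨c, hc, hmin⟩ := hcpt.exists_isMinOn hne' hrcont.continuousOn
    exact ⟨c, hc, fun y hy => hmin hy⟩
  set μ : Set X → X := fun s =>
    if h : ∃ c ∈ convexHull ℝ s, ∀ y ∈ convexHull ℝ s, r c ≤ r y then h.choose else a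
    with hμdef
  set A : ℕ → Set X := fun n => Nat.rec {a} (fun _ s => insert (F (μ s)) s) n with hAdef
  have hAsucc : ∀ n, A (n + 1) = insert (F (μ (A n))) (A n) := fun n => rfl
  have hAinv : ∀ n, A n ⊆ M ∧ (A n).Finite ∧ (A n).Nonempty := by
    intro n
    induction n with
    | zero => exact ⟨Set.singleton_subset_iff.2 haM, Set.finite_singleton a, ⟨a, rfl⟩⟩
    | succ k ih =>
      rw [hAsucc k]
      exact ⟨Set.insert_subset (hFmem _).1 ih.1, ih.2.1.insert _, Set.insert_nonempty _ _⟩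
  set c : ℕ → X := fun n => μ (A n) with hcdef
  have hc : ∀ n, c n ∈ convexHull ℝ (A n) ∧ ∀ y ∈ convexHull ℝ (A n), r (c n) ≤ r y := by
    intro n
    have h := hmin (A n) (hAinv n).2.1 (hAinv n).2.2
    have : c n = h.choose := by
      show μ (A n) = h.choose
      rw [hμdef]
      exact dif_pos h
    rw [this]
    exact h.choose_spec
  have hAmono : ∀ m n : ℕ, m ≤ n → A m ⊆ A n := by
    intro m n hmn
    induction n, hmn using Nat.le_induction with
    | base => exact Set.Subset.rfl
    | succ k hk ih =>
      rw [hAsucc k]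
      exact ih.trans (Set.subset_insert _ _)
  set v : ℕ → X := fun n => F (c n) with hvdef
  have hvM : ∀ n, v n ∈ M := fun n => (hFmem (c n)).1
  have hvA : ∀ n, v n ∈ A (n + 1) := by
    intro n
    rw [hAsucc n]
    exact Set.mem_insert _ _
  -- two close consecutive farthest points via compactness
  obtain ⟨mstar, _, φ, hφ, hconv⟩ := hcomp.tendsto_subseq hvM
  have h16 : (0:ℝ) < D / 16 := by linarith
  obtain ⟨N, hN⟩ := (Metric.tendsto_atTop.1 hconv) (D / 16) h16
  set n : ℕ := φ N with hn
  set n' : ℕ := φ (N + 1) with hn'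
  have hnn' : n < n' := hφ (Nat.lt_succ_self N)
  have hclose : dist (v n) (v n') < D / 8 := by
    have h1 := hN N le_rfl
    have h2 := hN (N + 1) (Nat.le_succ N)
    calc dist (v n) (v n') ≤ dist (v n) mstar + dist mstar (v n') := dist_triangle _ _ _
      _ < D / 16 + D / 16 := by
          rw [dist_comm mstar (v n')]
          exact add_lt_add h1 h2
      _ = D / 8 := by ring
  -- setup for the contradiction
  set c' : X := c n' with hc'def
  set R' : ℝ := r c' with hR'def
  set u : X := F c' with hudef
  have huv : u = v n' := rfl
  have hR'half : D ≤ 2 * R' := hghalf c'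
  have hc'K : c' ∈ convexHull ℝ (A n') := (hc n').1
  have hvvA : v n ∈ A n' := hAmono (n + 1) n' hnn' (hvA n)
  have hvvK : v n ∈ convexHull ℝ (A n') := subset_convexHull ℝ _ hvvA
  have hvnM : v n ∈ M := hvM n
  have huM : u ∈ M := (hFmem c').1
  have hunorm : ‖c' - u‖ = R' := (hFmem c').2
  -- far part of M
  set Mf : Set X := {p ∈ M | D / 8 ≤ dist p u} with hMfdef
  have hMfcpt : IsCompact Mf := by
    have hcl : IsClosed {p : X | D / 8 ≤ dist p u} :=
      isClosed_le continuous_const (Continuous.dist continuous_id continuous_const)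
    exact hcomp.inter_right hcl
  have hMfne : Mf.Nonempty := by
    by_contra hcontra
    rw [Set.not_nonempty_iff_eq_empty] at hcontra
    have hsmall : ∀ p ∈ M, dist p u < D / 8 := by
      intro p hp
      by_contra hge
      push_neg at hge
      have : p ∈ Mf := ⟨hp, hge⟩
      rw [hcontra] at this
      exact this
    have hdiam : D ≤ D / 4 := by
      refine Metric.diam_le_of_forall_dist_le (by linarith) ?_
      intro p hp q hq
      calc dist p q ≤ dist p u + dist u q := dist_triangle _ _ _
        _ ≤ D / 8 + D / 8 := by
            have h1 := hsmall p hp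
            have h2 := hsmall q hq
            rw [dist_comm u q]
            linarith
        _ = D / 4 := by ring
    linarith
  obtain ⟨p₀, hp₀Mf, hp₀max⟩ := hMfcpt.exists_isMaxOn hMfne
    ((continuous_const.sub continuous_id).norm.continuousOn :
      ContinuousOn (fun p => ‖c' - p‖) Mf)
  set s : ℝ := ‖c' - p₀‖ with hsdef
  have hp₀maxle : ∀ q ∈ Mf, ‖c' - q‖ ≤ s := fun q hq => hp₀max hq
  have hp₀M : p₀ ∈ M := hp₀Mf.1
  have hsleR' : s ≤ R' := hle c' p₀ hp₀M
  have hslt : s < R' := by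
    rcases lt_or_eq_of_le hsleR' with h | h
    · exact h
    · exfalso
      have : p₀ = F c' := hFuniq c' p₀ hp₀M h
      have hdistpu : dist p₀ u = 0 := by rw [this]; exact dist_self u
      have := hp₀Mf.2
      rw [hdistpu] at this
      linarith
  set δ : ℝ := R' - s with hδdef
  have hδpos : 0 < δ := by rw [hδdef]; linarith
  set t : ℝ := min (δ / (2 * (D + δ))) 1 with htdef
  have hDδpos : 0 < D + δ := by linarith
  have htpos : 0 < t := lt_min (by positivity) one_pos
  have htle1 : t ≤ 1 := min_le_right _ _
  have htle : t * (D + δ) ≤ δ / 2 := by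
    have h1 : t ≤ δ / (2 * (D + δ)) := min_le_left _ _
    calc t * (D + δ) ≤ (δ / (2 * (D + δ))) * (D + δ) :=
          mul_le_mul_of_nonneg_right h1 (le_of_lt hDδpos)
      _ = δ / 2 := by field_simp
  set w : X := (1 - t) • c' + t • (v n) with hwdef
  have hwK : w ∈ convexHull ℝ (A n') :=
    (convex_convexHull ℝ (A n')) hc'K hvvK (by linarith) (le_of_lt htpos) (by ring)
  have hminw : R' ≤ r w := (hc n').2 w hwK
  set γ : ℝ := min (t * (D / 4)) (δ / 2) with hγdef
  have hγpos : 0 < γ := lt_min (by positivity) (by positivity)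
  have hR'0 : 0 ≤ R' := hR'def ▸ hrnonneg c'
  have hleR' : ∀ p ∈ M, ‖c' - p‖ ≤ R' := fun p hp => hR'def ▸ hle c' p hp
  have hγle2 : γ ≤ δ / 2 := hγdef ▸ min_le_right (t * (D / 4)) (δ / 2)
  have hγle1 : γ ≤ t * (D / 4) := hγdef ▸ min_le_left (t * (D / 4)) (δ / 2)
  clear_value γ w t δ s u R' c'
  clear hμdef hAdef hcdef hvdef hrdef hn hn' hsdef hR'def hc'def hudef
  -- key estimate : every point of M is at distance ≤ R' - γ from w
  have hkey : ∀ p ∈ M, ‖w - p‖ ≤ R' - γ := by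
    intro p hp
    have hsplit : w - p = (1 - t) • (c' - p) + t • (v n - p) := by
      rw [hwdef]
      module
    have hnorm : ‖w - p‖ ≤ (1 - t) * ‖c' - p‖ + t * ‖v n - p‖ := by
      rw [hsplit]
      calc ‖(1 - t) • (c' - p) + t • (v n - p)‖
          ≤ ‖(1 - t) • (c' - p)‖ + ‖t • (v n - p)‖ := norm_add_le _ _
        _ = (1 - t) * ‖c' - p‖ + t * ‖v n - p‖ := by
            rw [norm_smul, norm_smul, Real.norm_eq_abs, Real.norm_eq_abs,
              abs_of_nonneg (by linarith : (0:ℝ) ≤ 1 - t), abs_of_nonneg (le_of_lt htpos)]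
    by_cases hpMf : D / 8 ≤ dist p u
    · -- far case
      have hpMf' : p ∈ Mf := ⟨hp, hpMf⟩
      have h1 : ‖c' - p‖ ≤ s := hp₀maxle p hpMf'
      have h2 : ‖v n - p‖ ≤ D := by
        rw [← dist_eq_norm]
        exact hdistD _ hvnM _ hp
      have hcalc : (1 - t) * ‖c' - p‖ + t * ‖v n - p‖ ≤ (1 - t) * s + t * D := by
        have := mul_le_mul_of_nonneg_left h1 (by linarith : (0:ℝ) ≤ 1 - t)
        have := mul_le_mul_of_nonneg_left h2 (le_of_lt htpos)
        linarith
      have hfar : (1 - t) * s + t * D ≤ R' - δ / 2 := by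
        have hs' : s = R' - δ := by rw [hδdef]; ring
        rw [hs']
        have h5 : 0 ≤ t * R' := mul_nonneg (le_of_lt htpos) hR'0
        have heq : (1 - t) * (R' - δ) + t * D = R' - δ - t * R' + t * (D + δ) := by ring
        rw [heq]
        linarith [htle, h5]
      have hγle : γ ≤ δ / 2 := hγle2
      linarith
    · -- near case
      push_neg at hpMf
      have h1 : ‖c' - p‖ ≤ R' := hleR' p hp
      have h2 : ‖v n - p‖ ≤ D / 4 := by
        calc ‖v n - p‖ = dist (v n) p := (dist_eq_norm _ _).symm
          _ ≤ dist (v n) (v n') + dist (v n') p := dist_triangle _ _ _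
          _ ≤ D / 8 + D / 8 := by
              have h3 : dist (v n') p = dist p u := by rw [← huv, dist_comm]
              have h4 := hclose
              rw [h3]
              linarith
          _ = D / 4 := by ring
      have hcalc : (1 - t) * ‖c' - p‖ + t * ‖v n - p‖ ≤ (1 - t) * R' + t * (D / 4) := by
        have := mul_le_mul_of_nonneg_left h1 (by linarith : (0:ℝ) ≤ 1 - t)
        have := mul_le_mul_of_nonneg_left h2 (le_of_lt htpos)
        linarith
      have hnear : (1 - t) * R' + t * (D / 4) ≤ R' - t * (D / 4) := by
        have h7 : t * (D / 2) ≤ t * R' :=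
          mul_le_mul_of_nonneg_left (by linarith) (le_of_lt htpos)
        have h8 : t * (D / 2) = 2 * (t * (D / 4)) := by ring
        have heq : (1 - t) * R' + t * (D / 4) = R' - t * R' + t * (D / 4) := by ring
        rw [heq]
        linarith [h7, h8]
      have hγle : γ ≤ t * (D / 4) := hγle1
      linarith
  have hrw : r w ≤ R' - γ := by
    refine csSup_le (hne w) ?_
    rintro b ⟨p, hp, rfl⟩
    exact hkey p hp
  linarith
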